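/- arXiv:2507.13165 — 4 statements merged into one kernel-verified Lean document; each statement's English description precedes it below -/
import Mathlib

section
/- Let b be a positive integer, G a graph, and {X_1, …, X_m} a b-deficiency complete partition of V(G) with |X_i| ≥ mb + 2t for each i. Suppose C_1, …, C_t are cliques of G such that |C_i ∩ X_j| ≤ 2 for all i, j, and for each i there is at most one j with |C_i ∩ X_j| = 2. Then there exist cliques D_1, …, D_t of G such that: (1) C_i ⊆ D_i for each i; (2) the sets D_1 − C_1, …, D_t − C_t are pairwise disjoint; (3) for each i, |D_i ∩ X_j| = 1 for all j except possibly one index j at which |D_i ∩ X_j| = |C_i ∩ X_j| = 2. -/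
open SimpleGraph Finset

/-- Number of edges of a simple graph. -/
noncomputable def edgeCount {V : Type*} (G : SimpleGraph V) : ℕ := G.edgeSet.ncard

/-- `G` contains a copy of `H` (an injective graph homomorphism). -/
def HasCopy {W V : Type*} (H : SimpleGraph W) (G : SimpleGraph V) : Prop :=
  ∃ f : H →g G, Function.Injective f

/-- Turán number: maximum number of edges of an `H`-free graph on `n` vertices. -/
noncomputable def exNum (n : ℕ) {W : Type*} (H : SimpleGraph W) : ℕ :=
  sSup {m | ∃ G : SimpleGraph (Fin n), ¬ HasCopy H G ∧ m = edgeCount G}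

/-- The `(k,r)`-fan: `k` cliques of size `r` sharing exactly one common vertex `0`. -/
def fanGraph (k r : ℕ) : SimpleGraph (Fin ((r-1)*k+1)) :=
  SimpleGraph.fromRel (fun u v =>
    u = 0 ∨ v = 0 ∨ (u.val - 1) / (r - 1) = (v.val - 1) / (r - 1))

/-- Matching number of a graph. -/
noncomputable def matchNum {V : Type*} (G : SimpleGraph V) : ℕ :=
  sSup {m | ∃ M : SimpleGraph.Subgraph G, M.IsMatching ∧ m = M.edgeSet.ncard}

/-- `fMax ν Δ` : maximum number of edges of a graph with matching number at most `ν`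
and maximum degree at most `Δ`. -/
noncomputable def fMax (ν Δ : ℕ) : ℕ :=
  sSup {m | ∃ (n : ℕ) (G : SimpleGraph (Fin n)), matchNum G ≤ ν ∧
    (∀ v, (G.neighborSet v).ncard ≤ Δ) ∧ m = edgeCount G}

/-- There is a rainbow copy of `H` in `G` under the edge-coloring `c`. -/
def HasRainbowCopy {W V : Type*} (c : Sym2 V → ℕ) (H : SimpleGraph W) (G : SimpleGraph V) : Prop :=
  ∃ f : H →g G, Function.Injective f ∧
    ∀ e₁ ∈ H.edgeSet, ∀ e₂ ∈ H.edgeSet, c (e₁.map f) = c (e₂.map f) → e₁ = e₂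

/-- Anti-Ramsey number: least (positive) number `r` of colors such that every edge-coloring
of `K_n` using exactly `r` colors contains a rainbow copy of `H`. -/
noncomputable def antiRamsey (n : ℕ) {W : Type*} (H : SimpleGraph W) : ℕ :=
  sInf {r | 0 < r ∧ ∀ c : Sym2 (Fin n) → ℕ,
    (c '' (⊤ : SimpleGraph (Fin n)).edgeSet).ncard = r →
    HasRainbowCopy c H (⊤ : SimpleGraph (Fin n))}

private lemma extendOne' {V : Type*} [Fintype V] [DecidableEq V] (G : SimpleGraph V)
    (b m : ℕ) (X : Fin m → Finset V)
    (hdisj : ∀ i j, i ≠ j → Disjoint (X i) (X j))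
    (hcover : ∀ v, ∃ i, v ∈ X i)
    (hdom : ∀ i j, i ≠ j → ∀ x ∈ X i,
      (X j).card - b ≤ ((X j : Set V) ∩ G.neighborSet x).ncard)
    (F : Finset V) (hF : ∀ j, (F ∩ X j).card + m * b + 1 ≤ (X j).card) :
    ∀ (n : ℕ) (K : Finset V), (univ.filter (fun j => K ∩ X j = ∅)).card ≤ n →
    G.IsClique (K : Set V) → (∀ j, (K ∩ X j).card ≤ 2) →
    (∀ j j', (K ∩ X j).card = 2 → (K ∩ X j').card = 2 → j = j') →
    ∃ D : Finset V, K ⊆ D ∧ G.IsClique (D : Set V) ∧ Disjoint (D \ K) F ∧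
      (∀ j, (K ∩ X j = ∅ → (D ∩ X j).card = 1) ∧ (K ∩ X j ≠ ∅ → D ∩ X j = K ∩ X j)) ∧
      (∀ j, ((D \ K) ∩ X j).card ≤ 1) := by
  classical
  intro n
  induction n with
  | zero =>
    intro K hn hcl h2 h2u
    refine ⟨K, subset_rfl, hcl, by simp, fun j => ⟨fun hj => ?_, fun _ => rfl⟩, fun j => by simp⟩
    exfalso
    have : j ∈ univ.filter (fun j => K ∩ X j = ∅) := by simp [hj]
    have := card_pos.mpr ⟨j, this⟩
    omega
  | succ n ih =>
    intro K hn hcl h2 h2u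
    by_cases hemp : univ.filter (fun j => K ∩ X j = ∅) = ∅
    · refine ⟨K, subset_rfl, hcl, by simp, fun j => ⟨fun hj => ?_, fun _ => rfl⟩, fun j => by simp⟩
      exfalso
      have : j ∈ univ.filter (fun j => K ∩ X j = ∅) := by simp [hj]
      simp [hemp] at this
    · obtain ⟨j₀, hj₀⟩ := nonempty_iff_ne_empty.mpr hemp
      have hj₀e : K ∩ X j₀ = ∅ := (mem_filter.mp hj₀).2
      -- every vertex of K lies in some class other than j₀, with few non-neighbors in X j₀
      have hKm : K.card ≤ m := by
        have hsub : K ⊆ univ.biUnion (fun j => K ∩ X j) := by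
          intro y hy
          obtain ⟨j, hj⟩ := hcover y
          exact mem_biUnion.mpr ⟨j, mem_univ _, mem_inter.mpr ⟨hy, hj⟩⟩
        have h1 : K.card ≤ ∑ j, (K ∩ X j).card :=
          (card_le_card hsub).trans (card_biUnion_le)
        have hm : m = Fintype.card (Fin m) := by simp
        by_cases hex2 : ∃ j₁, (K ∩ X j₁).card = 2
        · obtain ⟨j₁, hj₁⟩ := hex2
          have hne : j₀ ≠ j₁ := by
            intro h; rw [h] at hj₀e; simp [hj₀e] at hj₁
          have hm2 : 2 ≤ m := by
            rw [hm]; exact Fintype.one_lt_card_iff_nontrivial.mpr ⟨j₀, j₁, hne⟩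
          have e1 : ∑ j, (K ∩ X j).card
              = (K ∩ X j₁).card + ∑ j ∈ univ.erase j₁, (K ∩ X j).card :=
            (Finset.add_sum_erase _ _ (mem_univ j₁)).symm
          have hj₀m : j₀ ∈ univ.erase j₁ := mem_erase.mpr ⟨hne, mem_univ _⟩
          have e2 : ∑ j ∈ univ.erase j₁, (K ∩ X j).card
              = (K ∩ X j₀).card + ∑ j ∈ (univ.erase j₁).erase j₀, (K ∩ X j).card :=
            (Finset.add_sum_erase _ _ hj₀m).symm
          have e3 : ∑ j ∈ (univ.erase j₁).erase j₀, (K ∩ X j).card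
              ≤ ((univ.erase j₁).erase j₀).card * 1 := by
            apply Finset.sum_le_card_nsmul
            intro j hj
            have hj' := mem_erase.mp hj
            have hj'' := mem_erase.mp hj'.2
            have := h2 j
            have hne2 : (K ∩ X j).card ≠ 2 := fun h => hj''.1 (h2u j j₁ h hj₁)
            omega
          have ec : ((univ.erase j₁).erase j₀).card = m - 2 := by
            rw [card_erase_of_mem hj₀m, card_erase_of_mem (mem_univ _), card_univ,
              Fintype.card_fin]
            omega
          rw [ec] at e3
          have : (K ∩ X j₀).card = 0 := by simp [hj₀e]
          omega
        · push_neg at hex2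
          have : ∑ j, (K ∩ X j).card ≤ (univ : Finset (Fin m)).card * 1 := by
            apply Finset.sum_le_card_nsmul
            intro j _
            have := h2 j
            have := hex2 j
            omega
          rw [card_univ, Fintype.card_fin, mul_one] at this
          omega
      -- the bad set
      set Bad : Finset V :=
        (F ∩ X j₀) ∪ K.biUnion (fun y => (X j₀).filter (fun v => ¬ G.Adj y v)) with hBad
      have hBadSub : Bad ⊆ X j₀ := by
        intro v hv
        rcases mem_union.mp hv with h | h
        · exact (mem_inter.mp h).2
        · obtain ⟨y, _, hy⟩ := mem_biUnion.mp h
          exact (mem_filter.mp hy).1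
      have hBadCard : Bad.card + 1 ≤ (X j₀).card := by
        have h1 : (K.biUnion (fun y => (X j₀).filter (fun v => ¬ G.Adj y v))).card
            ≤ ∑ y ∈ K, ((X j₀).filter (fun v => ¬ G.Adj y v)).card := card_biUnion_le
        have h2' : ∀ y ∈ K, ((X j₀).filter (fun v => ¬ G.Adj y v)).card ≤ b := by
          intro y hy
          obtain ⟨j', hj'⟩ := hcover y
          have hne : j' ≠ j₀ := by
            intro h; rw [h] at hj'
            have : y ∈ K ∩ X j₀ := mem_inter.mpr ⟨hy, hj'⟩
            simp [hj₀e] at this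
          have hd := hdom j' j₀ hne y hj'
          have : ((X j₀ : Set V) ∩ G.neighborSet y)
              = (((X j₀).filter (fun v => G.Adj y v)) : Finset V) := by
            ext v
            simp [SimpleGraph.mem_neighborSet, and_comm]
          rw [this, Set.ncard_coe_finset] at hd
          have := Finset.card_filter_add_card_filter_not
            (s := X j₀) (p := fun v => G.Adj y v)
          omega
        have h3 : ∑ y ∈ K, ((X j₀).filter (fun v => ¬ G.Adj y v)).card ≤ K.card * b :=
          Finset.sum_le_card_nsmul _ _ _ h2'
        have h4 : Bad.card ≤ (F ∩ X j₀).card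
            + (K.biUnion (fun y => (X j₀).filter (fun v => ¬ G.Adj y v))).card := by
          rw [hBad]; exact card_union_le _ _
        have h5 := hF j₀
        have : K.card * b ≤ m * b := Nat.mul_le_mul_right b hKm
        omega
      obtain ⟨v, hv⟩ : (X j₀ \ Bad).Nonempty := by
        rw [← card_pos, card_sdiff_of_subset hBadSub]; omega
      have hvX : v ∈ X j₀ := (mem_sdiff.mp hv).1
      have hvB : v ∉ Bad := (mem_sdiff.mp hv).2
      have hvF : v ∉ F := fun h => hvB (mem_union_left _ (mem_inter.mpr ⟨h, hvX⟩))
      have hvK : v ∉ K := fun h => by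
        have : v ∈ K ∩ X j₀ := mem_inter.mpr ⟨h, hvX⟩
        simp [hj₀e] at this
      have hvAdj : ∀ y ∈ K, G.Adj y v := by
        intro y hy
        by_contra hna
        exact hvB (mem_union_right _ (mem_biUnion.mpr ⟨y, hy, mem_filter.mpr ⟨hvX, hna⟩⟩))
      set K' : Finset V := insert v K with hK'
      have hclK' : G.IsClique (K' : Set V) := by
        rw [hK', coe_insert]
        exact hcl.insert (fun y hy hne => ((hvAdj y hy).symm))
      have hvnotj : ∀ j, j ≠ j₀ → v ∉ X j := by
        intro j hne hvj
        exact Finset.disjoint_left.mp (hdisj j₀ j (Ne.symm hne)) hvX hvj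
      have hK'int : ∀ j, j ≠ j₀ → K' ∩ X j = K ∩ X j := by
        intro j hne
        rw [hK', insert_inter_of_notMem (hvnotj j hne)]
      have hK'j₀ : K' ∩ X j₀ = {v} := by
        rw [hK', insert_inter_of_mem hvX, hj₀e, LawfulSingleton.insert_empty_eq]
      have hfil : univ.filter (fun j => K' ∩ X j = ∅) ⊆
          (univ.filter (fun j => K ∩ X j = ∅)).erase j₀ := by
        intro j hj
        have hje := (mem_filter.mp hj).2
        have hne : j ≠ j₀ := by
          intro h; rw [h, hK'j₀] at hje; simp at hje
        refine mem_erase.mpr ⟨hne, mem_filter.mpr ⟨mem_univ _, ?_⟩⟩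
        rw [← hK'int j hne]; exact hje
      have hfn : (univ.filter (fun j => K' ∩ X j = ∅)).card ≤ n := by
        have := card_le_card hfil
        rw [card_erase_of_mem hj₀] at this
        have := card_pos.mpr ⟨j₀, hj₀⟩
        omega
      have h2K' : ∀ j, (K' ∩ X j).card ≤ 2 := by
        intro j
        by_cases hje : j = j₀
        · rw [hje, hK'j₀]; simp
        · rw [hK'int j hje]; exact h2 j
      have h2uK' : ∀ j j', (K' ∩ X j).card = 2 → (K' ∩ X j').card = 2 → j = j' := by
        intro j j' hj hj'
        have hj0 : j ≠ j₀ := by intro h; rw [h, hK'j₀] at hj; simp at hj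
        have hj'0 : j' ≠ j₀ := by intro h; rw [h, hK'j₀] at hj'; simp at hj'
        rw [hK'int j hj0] at hj; rw [hK'int j' hj'0] at hj'
        exact h2u j j' hj hj'
      obtain ⟨D, hKD, hDcl, hDF, hDcls, hD1⟩ := ih K' hfn hclK' h2K' h2uK'
      have hKK' : K ⊆ K' := subset_insert _ _
      have hvD : v ∈ D := hKD (mem_insert_self _ _)
      have hDKsub : D \ K ⊆ insert v (D \ K') := by
        intro x hx
        rcases mem_sdiff.mp hx with ⟨hxD, hxK⟩
        by_cases hxv : x = v
        · exact mem_insert.mpr (Or.inl hxv)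
        · exact mem_insert.mpr (Or.inr (mem_sdiff.mpr ⟨hxD, fun h =>
            (mem_insert.mp h).elim hxv hxK⟩))
      refine ⟨D, hKK'.trans hKD, hDcl, ?_, ?_, ?_⟩
      · refine Finset.disjoint_left.mpr (fun x hx hxF => ?_)
        have := hDKsub hx
        rcases mem_insert.mp this with h | h
        · exact hvF (h ▸ hxF)
        · exact Finset.disjoint_left.mp hDF h hxF
      · intro j
        constructor
        · intro hje
          by_cases hjj : j = j₀
          · subst hjj
            have := (hDcls j).2 (by rw [hK'j₀]; simp)
            rw [this, hK'j₀]; simp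
          · exact (hDcls j).1 (by rw [hK'int j hjj]; exact hje)
        · intro hje
          have hjj : j ≠ j₀ := by intro h; rw [h] at hje; exact hje hj₀e
          have := (hDcls j).2 (by rw [hK'int j hjj]; exact hje)
          rw [this, hK'int j hjj]
      · intro j
        by_cases hjj : j = j₀
        · rw [hjj]
          have hDj : D ∩ X j₀ = {v} := by
            have := (hDcls j₀).2 (by rw [hK'j₀]; simp)
            rw [this, hK'j₀]
          have : (D \ K) ∩ X j₀ ⊆ {v} := by
            intro x hx
            have : x ∈ D ∩ X j₀ := mem_inter.mpr ⟨(mem_sdiff.mp (mem_inter.mp hx).1).1,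
              (mem_inter.mp hx).2⟩
            rw [hDj] at this; exact this
          calc ((D \ K) ∩ X j₀).card ≤ ({v} : Finset V).card := card_le_card this
            _ = 1 := card_singleton v
        · have hsub : (D \ K) ∩ X j ⊆ (D \ K') ∩ X j := by
            intro x hx
            rcases mem_inter.mp hx with ⟨hx1, hx2⟩
            have := hDKsub hx1
            rcases mem_insert.mp this with h | h
            · exact absurd (h ▸ hx2) (hvnotj j hjj)
            · exact mem_inter.mpr ⟨h, hx2⟩
          exact (card_le_card hsub).trans (hD1 j)

private lemma extendAll' {V : Type*} [Fintype V] [DecidableEq V] (G : SimpleGraph V)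
    (b m : ℕ) (X : Fin m → Finset V)
    (hdisj : ∀ i j, i ≠ j → Disjoint (X i) (X j))
    (hcover : ∀ v, ∃ i, v ∈ X i)
    (hdom : ∀ i j, i ≠ j → ∀ x ∈ X i,
      (X j).card - b ≤ ((X j : Set V) ∩ G.neighborSet x).ncard) :
    ∀ (t : ℕ) (C : Fin t → Finset V) (F : Finset V),
    (∀ j, (F ∩ X j).card + t + m * b ≤ (X j).card) →
    (∀ i, G.IsClique ((C i : Set V))) →
    (∀ i j, (C i ∩ X j).card ≤ 2) →
    (∀ i j j', (C i ∩ X j).card = 2 → (C i ∩ X j').card = 2 → j = j') →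
    ∃ D : Fin t → Finset V,
      (∀ i, G.IsClique ((D i : Set V))) ∧ (∀ i, C i ⊆ D i) ∧
      (∀ i, Disjoint (D i \ C i) F) ∧
      (∀ i k, i ≠ k → Disjoint (D i \ C i) (D k \ C k)) ∧
      (∀ i j, (C i ∩ X j = ∅ → (D i ∩ X j).card = 1) ∧
        (C i ∩ X j ≠ ∅ → D i ∩ X j = C i ∩ X j)) := by
  classical
  intro t
  induction t with
  | zero =>
    intro C F hF hcl h2 h2u
    exact ⟨fun i => i.elim0, fun i => i.elim0, fun i => i.elim0, fun i => i.elim0,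
      fun i => i.elim0, fun i => i.elim0⟩
  | succ t ih =>
    intro C F hF hcl h2 h2u
    obtain ⟨D₀, hCD₀, hD₀cl, hD₀F, hD₀cls, hD₀1⟩ :=
      extendOne' G b m X hdisj hcover hdom F
        (fun j => by have := hF j; omega)
        (univ.filter (fun j => C 0 ∩ X j = ∅)).card (C 0) le_rfl (hcl 0) (h2 0) (h2u 0)
    set F' : Finset V := F ∪ (D₀ \ C 0) with hF'def
    have hF' : ∀ j, (F' ∩ X j).card + t + m * b ≤ (X j).card := by
      intro j
      have h1 : F' ∩ X j ⊆ (F ∩ X j) ∪ ((D₀ \ C 0) ∩ X j) := by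
        rw [hF'def, union_inter_distrib_right]
      have := (card_le_card h1).trans (card_union_le _ _)
      have := hD₀1 j
      have := hF j
      omega
    obtain ⟨D', hD'cl, hCD', hD'F', hD'disj, hD'cls⟩ :=
      ih (fun i => C i.succ) F' hF' (fun i => hcl i.succ) (fun i => h2 i.succ)
        (fun i => h2u i.succ)
    refine ⟨Fin.cons D₀ D', ?_, ?_, ?_, ?_, ?_⟩
    · intro i
      refine Fin.cases ?_ ?_ i
      · simpa using hD₀cl
      · intro k; simpa using hD'cl k
    · intro i
      refine Fin.cases ?_ ?_ i
      · simpa using hCD₀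
      · intro k; simpa using hCD' k
    · intro i
      refine Fin.cases ?_ ?_ i
      · simpa using hD₀F
      · intro k
        simp only [Fin.cons_succ]
        exact (hD'F' k).mono_right (subset_union_left)
    · intro i k
      refine Fin.cases ?_ ?_ i
      · refine Fin.cases ?_ ?_ k
        · intro h; exact absurd rfl h
        · intro k' _
          simp only [Fin.cons_zero, Fin.cons_succ]
          exact ((hD'F' k').mono_right (subset_union_right)).symm
      · intro i'
        refine Fin.cases ?_ ?_ k
        · intro _
          simp only [Fin.cons_zero, Fin.cons_succ]
          exact (hD'F' i').mono_right (subset_union_right)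
        · intro k' hne
          simp only [Fin.cons_succ]
          exact hD'disj i' k' (fun h => hne (by rw [h]))
    · intro i
      refine Fin.cases ?_ ?_ i
      · simpa using hD₀cls
      · intro k; simpa using hD'cls k

theorem extend_cliques {V : Type*} [Fintype V] [DecidableEq V] (G : SimpleGraph V)
    (b m t : ℕ) (hb : 1 ≤ b) (X : Fin m → Finset V)
    (hdisj : ∀ i j, i ≠ j → Disjoint (X i) (X j))
    (hcover : ∀ v, ∃ i, v ∈ X i)
    (hdom : ∀ i j, i ≠ j → ∀ x ∈ X i,
      (X j).card - b ≤ ((X j : Set V) ∩ G.neighborSet x).ncard)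
    (hsize : ∀ i, m * b + 2 * t ≤ (X i).card)
    (C : Fin t → Finset V) (hC : ∀ i, G.IsClique (C i : Set V))
    (hC2 : ∀ i j, (C i ∩ X j).card ≤ 2)
    (hC2' : ∀ i j j', (C i ∩ X j).card = 2 → (C i ∩ X j').card = 2 → j = j') :
    ∃ D : Fin t → Finset V,
      (∀ i, G.IsClique (D i : Set V)) ∧
      (∀ i, C i ⊆ D i) ∧
      (∀ i j, i ≠ j → Disjoint (D i \ C i) (D j \ C j)) ∧
      (∀ i, (∀ j, (D i ∩ X j).card = 1) ∨
        ∃ j₀, (D i ∩ X j₀).card = 2 ∧ (C i ∩ X j₀).card = 2 ∧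
          ∀ j, j ≠ j₀ → (D i ∩ X j).card = 1) := by
  classical
  obtain ⟨D, hDcl, hCD, _, hDdisj, hDcls⟩ :=
    extendAll' G b m X hdisj hcover hdom t C ∅
      (fun j => by
        have := hsize j
        simp only [empty_inter, card_empty]
        omega) hC hC2 hC2'
  refine ⟨D, hDcl, hCD, hDdisj, ?_⟩
  intro i
  by_cases hex : ∃ j₀, (C i ∩ X j₀).card = 2
  · obtain ⟨j₀, hj₀⟩ := hex
    right
    refine ⟨j₀, ?_, hj₀, ?_⟩
    · have hne : C i ∩ X j₀ ≠ ∅ := by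
        intro h; rw [h] at hj₀; simp at hj₀
      rw [(hDcls i j₀).2 hne]; exact hj₀
    · intro j hj
      have h2 := hC2 i j
      have hne2 : (C i ∩ X j).card ≠ 2 := fun h => hj (hC2' i j j₀ h hj₀)
      by_cases h0 : C i ∩ X j = ∅
      · exact (hDcls i j).1 h0
      · rw [(hDcls i j).2 h0]
        have := card_pos.mpr (nonempty_iff_ne_empty.mpr h0)
        omega
  · push_neg at hex
    left
    intro j
    by_cases h0 : C i ∩ X j = ∅
    · exact (hDcls i j).1 h0
    · rw [(hDcls i j).2 h0]
      have := hC2 i j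
      have := hex j
      have := card_pos.mpr (nonempty_iff_ne_empty.mpr h0)
      omega
end

section
/- Let G be a graph, K a clique of G containing a vertex v_0, vertex-disjoint from fixed cliques D_1,…,D_k except at v_0, and of maximum order among such cliques. Write V(K) = {v_0, v_1, …, v_s} and for each i ∈ {0,…,s} let X_i = (∩_{j≠i} N_G(v_j)) − V(∪_{j=1}^k D_j ∪ K). Then the sets X_0, …, X_s are pairwise disjoint, and for each i ≥ 1 the set X_i is an independent set in G. -/
open SimpleGraph Finset

/-- The set `X_i = (⋂_{j ≠ i} N_G(v_j)) \ (V(⋃ D_l) ∪ V(K))`. -/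
def Xset {V : Type*} (G : SimpleGraph V) {k s : ℕ} (D : Fin k → Finset V)
    (v : Fin (s + 1) → V) (i : Fin (s + 1)) : Set V :=
  (⋂ l ∈ ({i}ᶜ : Set (Fin (s + 1))), G.neighborSet (v l)) \
    ((⋃ l, (D l : Set V)) ∪ Set.range v)

private lemma Xset_mem {V : Type*} [Fintype V] (G : SimpleGraph V) {k s : ℕ}
    (D : Fin k → Finset V) (v : Fin (s + 1) → V) (i : Fin (s + 1)) {x : V}
    (hx : x ∈ Xset G D v i) :
    (∀ l, l ≠ i → G.Adj (v l) x) ∧ (∀ l, x ∉ D l) ∧ x ∉ Set.range v := by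
  obtain ⟨h1, h2⟩ := hx
  refine ⟨fun l hl => ?_, fun l hxl => h2 (Or.inl (Set.mem_iUnion.2 ⟨l, hxl⟩)),
    fun hr => h2 (Or.inr hr)⟩
  exact Set.mem_iInter₂.1 h1 l (by simpa using hl)

theorem Xsets_disjoint_and_independent {V : Type*} [Fintype V] [DecidableEq V]
    (G : SimpleGraph V) (k s : ℕ) (D : Fin k → Finset V) (v : Fin (s + 1) → V)
    (hv : Function.Injective v)
    (hclD : ∀ i, G.IsClique (D i : Set V)) (hv0D : ∀ i, v 0 ∈ D i)
    (hK : G.IsClique (Set.range v))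
    (hKD : ∀ i, (D i : Set V) ∩ Set.range v = {v 0})
    (hmax : ∀ K' : Finset V, G.IsClique (K' : Set V) → v 0 ∈ K' →
      (∀ i, (K' : Set V) ∩ (D i : Set V) ⊆ {v 0}) → K'.card ≤ s + 1) :
    (∀ i j : Fin (s + 1), i ≠ j → Disjoint (Xset G D v i) (Xset G D v j)) ∧
    (∀ i : Fin (s + 1), i ≠ 0 →
      ∀ a ∈ Xset G D v i, ∀ b ∈ Xset G D v i, ¬ G.Adj a b) := by
  classical
  constructor
  · intro i j hij
    rw [Set.disjoint_left]
    intro x hxi hxj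
    obtain ⟨hai, hDi, hri⟩ := Xset_mem G D v i hxi
    obtain ⟨haj, _, _⟩ := Xset_mem G D v j hxj
    have hall : ∀ l, G.Adj (v l) x := by
      intro l
      by_cases h : l = i
      · exact haj l (h ▸ hij)
      · exact hai l h
    have hximg : x ∉ Finset.univ.image v := by
      simp only [Finset.mem_image]
      rintro ⟨l, -, hl⟩
      exact hri ⟨l, hl⟩
    set K' : Finset V := insert x (Finset.univ.image v) with hK'
    have hcoe : (K' : Set V) = insert x (Set.range v) := by
      simp [hK', Set.image_univ]
    have hclique : G.IsClique (K' : Set V) := by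
      rw [hcoe]
      refine hK.insert ?_
      rintro b ⟨l, rfl⟩ _
      exact (hall l).symm
    have hcard : K'.card = s + 2 := by
      rw [hK', Finset.card_insert_of_notMem hximg,
        Finset.card_image_of_injective _ hv]
      simp
    have hv0 : v 0 ∈ K' := by
      simp [hK']
    have hint : ∀ l, (K' : Set V) ∩ (D l : Set V) ⊆ {v 0} := by
      intro l y hy
      rw [hcoe] at hy
      obtain ⟨hy1, hy2⟩ := hy
      rcases hy1 with rfl | hy1
      · exact absurd hy2 (hDi l)
      · have : y ∈ (D l : Set V) ∩ Set.range v := ⟨hy2, hy1⟩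
        rw [hKD l] at this
        exact this
    have := hmax K' hclique hv0 hint
    omega
  · intro i hi a ha b hb hab
    obtain ⟨haa, haD, har⟩ := Xset_mem G D v i ha
    obtain ⟨hba, hbD, hbr⟩ := Xset_mem G D v i hb
    have hne : a ≠ b := hab.ne
    set T : Finset V := (Finset.univ.erase i).image v with hT
    have haT : a ∉ T := by
      simp only [hT, Finset.mem_image]
      rintro ⟨l, -, hl⟩
      exact har ⟨l, hl⟩
    have hbT : b ∉ T := by
      simp only [hT, Finset.mem_image]
      rintro ⟨l, -, hl⟩
      exact hbr ⟨l, hl⟩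
    set K' : Finset V := insert a (insert b T) with hK'
    have hTcoe : (T : Set V) ⊆ Set.range v := by
      intro y hy
      simp only [hT, Finset.coe_image, Set.mem_image] at hy
      obtain ⟨l, -, hl⟩ := hy
      exact ⟨l, hl⟩
    have hTmem : ∀ y ∈ (T : Set V), ∃ l, l ≠ i ∧ v l = y := by
      intro y hy
      simp only [hT, Finset.coe_image, Set.mem_image, Finset.mem_coe,
        Finset.mem_erase] at hy
      obtain ⟨l, hl, hly⟩ := hy
      exact ⟨l, hl.1, hly⟩
    have hclique : G.IsClique (K' : Set V) := by
      rw [hK', Finset.coe_insert, Finset.coe_insert]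
      refine (((hK.subset hTcoe).insert ?_).insert ?_)
      · intro y hy _
        obtain ⟨l, hl, rfl⟩ := hTmem y hy
        exact (hba l hl).symm
      · rintro y (rfl | hy) _
        · exact hab
        · obtain ⟨l, hl, rfl⟩ := hTmem y hy
          exact (haa l hl).symm
    have hcard : K'.card = s + 2 := by
      rw [hK', Finset.card_insert_of_notMem (by simp [hne, haT]),
        Finset.card_insert_of_notMem hbT, hT,
        Finset.card_image_of_injective _ hv, Finset.card_erase_of_mem (by simp)]
      simp
    have hv0 : v 0 ∈ K' := by
      have : v 0 ∈ T := by
        rw [hT, Finset.mem_image]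
        exact ⟨0, Finset.mem_erase.2 ⟨Ne.symm hi, Finset.mem_univ _⟩, rfl⟩
      simp [hK', this]
    have hint : ∀ l, (K' : Set V) ∩ (D l : Set V) ⊆ {v 0} := by
      intro l y hy
      obtain ⟨hy1, hy2⟩ := hy
      rw [hK', Finset.coe_insert, Finset.coe_insert] at hy1
      rcases hy1 with rfl | rfl | hy1
      · exact absurd hy2 (haD l)
      · exact absurd hy2 (hbD l)
      · have : y ∈ (D l : Set V) ∩ Set.range v := ⟨hy2, hTcoe hy1⟩
        rw [hKD l] at this
        exact this
    have := hmax K' hclique hv0 hint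
    omega
end

section
/- In the setting of the partition proof: with δ(G) > ((r−2)/(r−1))n − (k+1), if s is the number of non-center vertices of the maximum clique K (so the sets X_0,…,X_s are pairwise disjoint, X_i independent for i ≥ 1, and |X_i| ≥ ((r−1−s)/(r−1))n − (k+1)s − k(r−1) − s − 1), and G is F_{k+1,r}-free with n ≥ 4(k+1)²r⁴, then s = r − 2. -/
open SimpleGraph Finset

private noncomputable def fanMap {n : ℕ} (k r s : ℕ) (hr1 : 0 < r - 1) (hs : r - 1 ≤ s)
    (e : Fin k → Fin (r - 1) → Fin n) (v : Fin (s + 1) → Fin n) :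
    Fin ((r - 1) * (k + 1) + 1) → Fin n := fun u =>
  if u.val = 0 then v 0
  else if hb : (u.val - 1) / (r - 1) < k then
    e ⟨(u.val - 1) / (r - 1), hb⟩ ⟨(u.val - 1) % (r - 1), Nat.mod_lt _ hr1⟩
  else v ⟨(u.val - 1) % (r - 1) + 1, by have := Nat.mod_lt (u.val - 1) hr1; omega⟩

private lemma fanMap_zero {n : ℕ} (k r s : ℕ) (hr1 : 0 < r - 1) (hs : r - 1 ≤ s)
    (e : Fin k → Fin (r - 1) → Fin n) (v : Fin (s + 1) → Fin n)
    (u : Fin ((r - 1) * (k + 1) + 1)) (h : u.val = 0) :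
    fanMap k r s hr1 hs e v u = v 0 := by simp [fanMap, h]

private lemma fanMap_mid {n : ℕ} (k r s : ℕ) (hr1 : 0 < r - 1) (hs : r - 1 ≤ s)
    (e : Fin k → Fin (r - 1) → Fin n) (v : Fin (s + 1) → Fin n)
    (u : Fin ((r - 1) * (k + 1) + 1)) (h0 : u.val ≠ 0) (hb : (u.val - 1) / (r - 1) < k) :
    fanMap k r s hr1 hs e v u
      = e ⟨(u.val - 1) / (r - 1), hb⟩ ⟨(u.val - 1) % (r - 1), Nat.mod_lt _ hr1⟩ := by
  simp [fanMap, h0, hb]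

private lemma fanMap_hi {n : ℕ} (k r s : ℕ) (hr1 : 0 < r - 1) (hs : r - 1 ≤ s)
    (e : Fin k → Fin (r - 1) → Fin n) (v : Fin (s + 1) → Fin n)
    (u : Fin ((r - 1) * (k + 1) + 1)) (h0 : u.val ≠ 0) (hb : ¬ (u.val - 1) / (r - 1) < k) :
    fanMap k r s hr1 hs e v u
      = v ⟨(u.val - 1) % (r - 1) + 1, by have := Nat.mod_lt (u.val - 1) hr1; omega⟩ := by
  simp [fanMap, h0, hb]

lemma fan_copy_of_big_clique {n k r s : ℕ} (hk : 1 ≤ k) (hr : 4 ≤ r) (hs : r - 1 ≤ s)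
    {G : SimpleGraph (Fin n)} (D : Fin k → Finset (Fin n)) (v : Fin (s + 1) → Fin n)
    (hv : Function.Injective v)
    (hclD : ∀ i, G.IsClique (D i : Set (Fin n))) (hcardD : ∀ i, (D i).card = r)
    (hv0D : ∀ i, v 0 ∈ D i) (hDD : ∀ i j, i ≠ j → D i ∩ D j = {v 0})
    (hK : G.IsClique (Set.range v))
    (hKD : ∀ i, (D i : Set (Fin n)) ∩ Set.range v = {v 0}) :
    HasCopy (fanGraph (k + 1) r) G := by
  have hr1 : 0 < r - 1 := by omega
  have hcarde : ∀ i, ((D i).erase (v 0)).card = r - 1 := fun i => by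
    rw [Finset.card_erase_of_mem (hv0D i), hcardD i]
  set e : Fin k → Fin (r - 1) → Fin n := fun i j =>
    (((D i).erase (v 0)).equivFin.symm (Fin.cast (hcarde i).symm j)).1 with he
  have he_mem : ∀ i j, e i j ∈ (D i).erase (v 0) := fun i j =>
    (((D i).erase (v 0)).equivFin.symm (Fin.cast (hcarde i).symm j)).2
  have he_inj : ∀ i, Function.Injective (e i) := by
    intro i j₁ j₂ h
    have h2 := ((D i).erase (v 0)).equivFin.symm.injective (Subtype.ext h)
    exact Fin.ext (by simpa using congrArg Fin.val h2)
  set f := fanMap k r s hr1 hs e v with hf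
  -- basic facts
  have hne_v0 : ∀ i : Fin (s + 1), i.val ≠ 0 → v i ≠ v 0 := by
    intro i hi h
    exact hi (by rw [hv h, Fin.val_zero])
  have hfval : ∀ u : Fin ((r - 1) * (k + 1) + 1), u.val ≠ 0 → ¬ (u.val - 1) / (r - 1) < k →
      (u.val - 1) / (r - 1) = k := by
    intro u h0 hb
    have hlt : u.val - 1 < (k + 1) * (r - 1) := by
      have h3 : u.val < (r - 1) * (k + 1) + 1 := u.isLt
      have h4 : (k + 1) * (r - 1) = (r - 1) * (k + 1) := Nat.mul_comm _ _
      omega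
    have := (Nat.div_lt_iff_lt_mul hr1).mpr hlt
    omega
  -- f u ≠ v 0 for u ≠ 0
  have hfne0 : ∀ u : Fin ((r - 1) * (k + 1) + 1), u.val ≠ 0 → f u ≠ v 0 := by
    intro u h0
    by_cases hb : (u.val - 1) / (r - 1) < k
    · rw [hf, fanMap_mid k r s hr1 hs e v u h0 hb]
      exact Finset.ne_of_mem_erase (he_mem _ _)
    · rw [hf, fanMap_hi k r s hr1 hs e v u h0 hb]
      exact hne_v0 _ (by simp)
  -- injectivity
  have hinj : Function.Injective f := by
    intro u w huw
    by_cases hu0 : u.val = 0 <;> by_cases hw0 : w.val = 0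
    · exact Fin.ext (by omega)
    · exact absurd (by rw [← huw, hf, fanMap_zero k r s hr1 hs e v u hu0]) (Ne.symm (hfne0 w hw0))
    · exact absurd (by rw [huw, hf, fanMap_zero k r s hr1 hs e v w hw0]) (Ne.symm (hfne0 u hu0))
    · by_cases hbu : (u.val - 1) / (r - 1) < k <;> by_cases hbw : (w.val - 1) / (r - 1) < k
      · -- both in D blocks
        rw [hf, fanMap_mid k r s hr1 hs e v u hu0 hbu,
          fanMap_mid k r s hr1 hs e v w hw0 hbw] at huw
        by_cases hbb : (u.val - 1) / (r - 1) = (w.val - 1) / (r - 1)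
        · have hbb' : (⟨(u.val - 1) / (r - 1), hbu⟩ : Fin k) = ⟨(w.val - 1) / (r - 1), hbw⟩ :=
            Fin.ext hbb
          rw [hbb'] at huw
          have hj := he_inj _ huw
          have hjj : (u.val - 1) % (r - 1) = (w.val - 1) % (r - 1) := by
            simpa using congrArg Fin.val hj
          have hm : u.val - 1 = w.val - 1 := by
            rw [← Nat.div_add_mod (u.val - 1) (r - 1), ← Nat.div_add_mod (w.val - 1) (r - 1),
              hbb, hjj]
          exact Fin.ext (by omega)
        · exfalso
          have h1 := he_mem ⟨(u.val - 1) / (r - 1), hbu⟩ ⟨(u.val - 1) % (r - 1), Nat.mod_lt _ hr1⟩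
          have h2 := he_mem ⟨(w.val - 1) / (r - 1), hbw⟩ ⟨(w.val - 1) % (r - 1), Nat.mod_lt _ hr1⟩
          rw [← huw] at h2
          have hne : (⟨(u.val - 1) / (r - 1), hbu⟩ : Fin k) ≠ ⟨(w.val - 1) / (r - 1), hbw⟩ :=
            fun h => hbb (by simpa using congrArg Fin.val h)
          have hmem : e ⟨(u.val - 1) / (r - 1), hbu⟩ ⟨(u.val - 1) % (r - 1), Nat.mod_lt _ hr1⟩
              ∈ D ⟨(u.val - 1) / (r - 1), hbu⟩ ∩ D ⟨(w.val - 1) / (r - 1), hbw⟩ :=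
            Finset.mem_inter.mpr ⟨Finset.mem_of_mem_erase h1, Finset.mem_of_mem_erase h2⟩
          rw [hDD _ _ hne, Finset.mem_singleton] at hmem
          exact Finset.ne_of_mem_erase h1 hmem
      · exfalso
        rw [hf, fanMap_mid k r s hr1 hs e v u hu0 hbu,
          fanMap_hi k r s hr1 hs e v w hw0 hbw] at huw
        have h1 := he_mem ⟨(u.val - 1) / (r - 1), hbu⟩ ⟨(u.val - 1) % (r - 1), Nat.mod_lt _ hr1⟩
        have hmem : (e ⟨(u.val - 1) / (r - 1), hbu⟩ ⟨(u.val - 1) % (r - 1), Nat.mod_lt _ hr1⟩ : Fin n)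
            ∈ (D ⟨(u.val - 1) / (r - 1), hbu⟩ : Set (Fin n)) ∩ Set.range v := by
          exact ⟨Finset.mem_of_mem_erase h1, ⟨_, huw.symm⟩⟩
        rw [hKD] at hmem
        exact Finset.ne_of_mem_erase h1 hmem
      · exfalso
        rw [hf, fanMap_hi k r s hr1 hs e v u hu0 hbu,
          fanMap_mid k r s hr1 hs e v w hw0 hbw] at huw
        have h1 := he_mem ⟨(w.val - 1) / (r - 1), hbw⟩ ⟨(w.val - 1) % (r - 1), Nat.mod_lt _ hr1⟩
        have hmem : (e ⟨(w.val - 1) / (r - 1), hbw⟩ ⟨(w.val - 1) % (r - 1), Nat.mod_lt _ hr1⟩ : Fin n)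
            ∈ (D ⟨(w.val - 1) / (r - 1), hbw⟩ : Set (Fin n)) ∩ Set.range v := by
          exact ⟨Finset.mem_of_mem_erase h1, ⟨_, huw⟩⟩
        rw [hKD] at hmem
        exact Finset.ne_of_mem_erase h1 hmem
      · rw [hf, fanMap_hi k r s hr1 hs e v u hu0 hbu,
          fanMap_hi k r s hr1 hs e v w hw0 hbw] at huw
        have hi := hv huw
        have hjj : (u.val - 1) % (r - 1) = (w.val - 1) % (r - 1) := by
          simpa using congrArg Fin.val hi
        have hm : u.val - 1 = w.val - 1 := by
          rw [← Nat.div_add_mod (u.val - 1) (r - 1), ← Nat.div_add_mod (w.val - 1) (r - 1),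
            hfval u hu0 hbu, hfval w hw0 hbw, hjj]
        exact Fin.ext (by omega)
  -- adjacency to the center
  have hadj0 : ∀ u : Fin ((r - 1) * (k + 1) + 1), u.val ≠ 0 → G.Adj (v 0) (f u) := by
    intro u h0
    by_cases hb : (u.val - 1) / (r - 1) < k
    · rw [hf, fanMap_mid k r s hr1 hs e v u h0 hb]
      exact hclD _ (Finset.mem_coe.mpr (hv0D _))
        (Finset.mem_coe.mpr (Finset.mem_of_mem_erase (he_mem _ _)))
        (Ne.symm (Finset.ne_of_mem_erase (he_mem _ _)))
    · rw [hf, fanMap_hi k r s hr1 hs e v u h0 hb]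
      exact hK ⟨0, rfl⟩ ⟨_, rfl⟩ (Ne.symm (hne_v0 _ (by simp)))
  -- the homomorphism
  refine ⟨⟨f, ?_⟩, hinj⟩
  intro u w hadj
  rw [fanGraph, SimpleGraph.fromRel_adj] at hadj
  obtain ⟨hne, hrel⟩ := hadj
  have hrel' : u = 0 ∨ w = 0 ∨ (u.val - 1) / (r - 1) = (w.val - 1) / (r - 1) := by tauto
  have hz : ∀ x : Fin ((r - 1) * (k + 1) + 1), x = 0 ↔ x.val = 0 := by
    intro x; rw [Fin.ext_iff, Fin.val_zero]
  by_cases hu0 : u.val = 0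
  · rw [hf, fanMap_zero k r s hr1 hs e v u hu0]
    exact hadj0 w (fun h => hne (by rw [(hz u).mpr hu0, (hz w).mpr h]))
  · by_cases hw0 : w.val = 0
    · rw [hf, fanMap_zero k r s hr1 hs e v w hw0]
      exact (hadj0 u hu0).symm
    · have hbb : (u.val - 1) / (r - 1) = (w.val - 1) / (r - 1) := by
        rcases hrel' with h | h | h
        · exact absurd ((hz u).mp h) hu0
        · exact absurd ((hz w).mp h) hw0
        · exact h
      have hfne : f u ≠ f w := fun h => hne (hinj h)
      by_cases hbu : (u.val - 1) / (r - 1) < k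
      · have hbw : (w.val - 1) / (r - 1) < k := hbb ▸ hbu
        have h1 := he_mem ⟨(u.val - 1) / (r - 1), hbu⟩ ⟨(u.val - 1) % (r - 1), Nat.mod_lt _ hr1⟩
        have h2 := he_mem ⟨(w.val - 1) / (r - 1), hbw⟩ ⟨(w.val - 1) % (r - 1), Nat.mod_lt _ hr1⟩
        have hbb' : (⟨(w.val - 1) / (r - 1), hbw⟩ : Fin k) = ⟨(u.val - 1) / (r - 1), hbu⟩ :=
          Fin.ext hbb.symm
        rw [hf, fanMap_mid k r s hr1 hs e v u hu0 hbu, fanMap_mid k r s hr1 hs e v w hw0 hbw]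
        refine hclD ⟨(u.val - 1) / (r - 1), hbu⟩
          (Finset.mem_coe.mpr (Finset.mem_of_mem_erase h1)) ?_ ?_
        · rw [← hbb']
          exact Finset.mem_coe.mpr (Finset.mem_of_mem_erase h2)
        · rw [hf, fanMap_mid k r s hr1 hs e v u hu0 hbu,
            fanMap_mid k r s hr1 hs e v w hw0 hbw] at hfne
          exact hfne
      · have hbw : ¬ (w.val - 1) / (r - 1) < k := hbb ▸ hbu
        rw [hf, fanMap_hi k r s hr1 hs e v u hu0 hbu, fanMap_hi k r s hr1 hs e v w hw0 hbw]
        refine hK ⟨_, rfl⟩ ⟨_, rfl⟩ ?_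
        rw [hf, fanMap_hi k r s hr1 hs e v u hu0 hbu,
          fanMap_hi k r s hr1 hs e v w hw0 hbw] at hfne
        exact hfne


private lemma arith_sq (r : ℝ) (hr : 4 ≤ r) : 16 * r^2 ≤ r^4 := by
  nlinarith [mul_le_mul_of_nonneg_right (show (16:ℝ) ≤ r^2 by nlinarith) (sq_nonneg r)]

private lemma arith1 (k r n : ℝ) (hk : 1 ≤ k) (hr : 4 ≤ r) (hn : 4*(k+1)^2*r^4 ≤ n)
    (h2 : (r-2)*n < (k*r + k + 2)*(r-1)) : False := by
  have hrn : (0:ℝ) ≤ n := by nlinarith [arith_sq r hr, sq_nonneg (k+1), sq_nonneg r]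
  have e1 : (k*r + k + 2)*(r-1) ≤ 2*k*r*r := by
    nlinarith [mul_nonneg (by linarith : (0:ℝ) ≤ k) (by linarith : (0:ℝ) ≤ r),
      mul_nonneg (by linarith : (0:ℝ) ≤ k-1) (by linarith : (0:ℝ) ≤ r),
      mul_nonneg (mul_nonneg (by linarith : (0:ℝ) ≤ k-1) (by linarith : (0:ℝ) ≤ r)) (by linarith : (0:ℝ) ≤ r)]
  have e2 : 2*n ≤ (r-2)*n := by
    nlinarith [mul_nonneg (by linarith : (0:ℝ) ≤ r-4) hrn]
  have e3 : k*r*r ≤ 4*(k+1)^2*r^4 := by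
    have q2 : k*r^2 ≤ (k+1)^2*r^2 :=
      mul_le_mul_of_nonneg_right (by nlinarith) (sq_nonneg _)
    have q3 : (k+1)^2*r^2 ≤ (k+1)^2*r^4 :=
      mul_le_mul_of_nonneg_left (by nlinarith [arith_sq r hr]) (sq_nonneg _)
    nlinarith [sq_nonneg (k+1), sq_nonneg (r^2)]
  linarith

private lemma arith2 (k r n s : ℝ) (hk : 1 ≤ k) (hr : 4 ≤ r) (hs : 0 ≤ s) (hsr : s + 3 ≤ r)
    (hn : 4*(k+1)^2*r^4 ≤ n) :
    ((k+1)*s + k*(r-1) + s + 1)*(r-1) < (r-1-s)*n := by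
  have hrn : (0:ℝ) ≤ n := by nlinarith [arith_sq r hr, sq_nonneg (k+1), sq_nonneg r]
  have hsr3 : (0:ℝ) ≤ r-3-s := by linarith
  have hb1 : (k+1)*s + k*(r-1) + s + 1 ≤ (2*k+2)*r := by
    nlinarith [mul_nonneg (by linarith : (0:ℝ) ≤ k+1) hsr3,
      mul_nonneg (by linarith : (0:ℝ) ≤ k) (by linarith : (0:ℝ) ≤ r)]
  have t1 : 2*n ≤ (r-1-s)*n := by nlinarith [mul_nonneg hsr3 hrn]
  have t2 : ((k+1)*s + k*(r-1) + s + 1)*(r-1) ≤ (2*k+2)*r*(r-1) :=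
    mul_le_mul_of_nonneg_right hb1 (by linarith)
  have t3 : (2*k+2)*r*(r-1) < 8*(k+1)^2*r^4 := by
    have q1 : (2*k+2)*r*(r-1) ≤ 2*(k+1)*r^2 := by
      nlinarith [mul_nonneg (by linarith : (0:ℝ) ≤ 2*k+2) (by linarith : (0:ℝ) ≤ r)]
    have q2 : 2*(k+1)*r^2 < 8*(k+1)^2*r^4 := by
      nlinarith [arith_sq r hr, mul_pos (by linarith : (0:ℝ) < k+1) (by nlinarith : (0:ℝ) < r^2),
        mul_le_mul_of_nonneg_left (arith_sq r hr) (by nlinarith : (0:ℝ) ≤ (k+1)^2)]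
    linarith
  nlinarith

private lemma arith3 (k r n s : ℝ) (hk : 1 ≤ k) (hr : 4 ≤ r) (hs : 0 ≤ s) (hsr : s + 3 ≤ r)
    (hn : 4*(k+1)^2*r^4 ≤ n)
    (h5 : (r-2 + (r-1-s))*n < (n + (k+1) + ((k+1)*s + k*(r-1) + s + 1))*(r-1)) : False := by
  have hrn : (0:ℝ) ≤ n := by nlinarith [arith_sq r hr, sq_nonneg (k+1), sq_nonneg r]
  have hsr3 : (0:ℝ) ≤ r-3-s := by linarith
  have t1 : r*n ≤ (r-2 + (r-1-s))*n := by nlinarith [mul_nonneg hsr3 hrn]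
  have t2 : (k+1) + ((k+1)*s + k*(r-1) + s + 1) ≤ (2*k+3)*r := by
    nlinarith [mul_nonneg (by linarith : (0:ℝ) ≤ k+1) hsr3,
      mul_nonneg (by linarith : (0:ℝ) ≤ k) (by linarith : (0:ℝ) ≤ r)]
  have texp : (n + (k+1) + ((k+1)*s + k*(r-1) + s + 1))*(r-1)
      = n*(r-1) + ((k+1) + ((k+1)*s + k*(r-1) + s + 1))*(r-1) := by ring
  have t4 : ((k+1) + ((k+1)*s + k*(r-1) + s + 1))*(r-1) ≤ (2*k+3)*r*(r-1) :=
    mul_le_mul_of_nonneg_right t2 (by linarith)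
  have t5 : (2*k+3)*r*(r-1) < 4*(k+1)^2*r^4 := by
    have q1 : (2*k+3)*r*(r-1) < (2*k+3)*r^2 := by
      nlinarith [mul_pos (by linarith : (0:ℝ) < 2*k+3) (by linarith : (0:ℝ) < r)]
    have q2 : (2*k+3)*r^2 ≤ 4*(k+1)^2*r^4 := by
      have q3 : (2*k+3) ≤ 4*(k+1)^2 := by nlinarith
      have q4 : r^2 ≤ r^4 := by nlinarith [arith_sq r hr]
      have := mul_le_mul q3 q4 (sq_nonneg _) (by nlinarith : (0:ℝ) ≤ 4*(k+1)^2)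
      linarith
    linarith
  have trn : r*n = n*(r-1) + n := by ring
  linarith


theorem clique_size_eq (k r n s : ℕ) (hk : 1 ≤ k) (hr : 4 ≤ r)
    (hn : 4 * (k + 1)^2 * r^4 ≤ n) (G : SimpleGraph (Fin n))
    (hfree : ¬ HasCopy (fanGraph (k + 1) r) G)
    (hδ : ∀ v, ((r : ℝ) - 2) / ((r : ℝ) - 1) * n - (k + 1) < ((G.neighborSet v).ncard : ℝ))
    (D : Fin k → Finset (Fin n)) (v : Fin (s + 1) → Fin n)
    (hv : Function.Injective v)
    (hclD : ∀ i, G.IsClique (D i : Set (Fin n))) (hcardD : ∀ i, (D i).card = r)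
    (hv0D : ∀ i, v 0 ∈ D i) (hDD : ∀ i j, i ≠ j → D i ∩ D j = {v 0})
    (hK : G.IsClique (Set.range v))
    (hKD : ∀ i, (D i : Set (Fin n)) ∩ Set.range v = {v 0})
    (hmax : ∀ K' : Finset (Fin n), G.IsClique (K' : Set (Fin n)) → v 0 ∈ K' →
      (∀ i, (K' : Set (Fin n)) ∩ (D i : Set (Fin n)) ⊆ {v 0}) → K'.card ≤ s + 1)
    (hXdisj : ∀ i j : Fin (s + 1), i ≠ j → Disjoint (Xset G D v i) (Xset G D v j))
    (hXind : ∀ i : Fin (s + 1), i ≠ 0 →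
      ∀ a ∈ Xset G D v i, ∀ b ∈ Xset G D v i, ¬ G.Adj a b)
    (hXsize : ∀ i, ((r : ℝ) - 1 - s) / ((r : ℝ) - 1) * n - (k + 1) * s - k * (r - 1) - s - 1
      ≤ ((Xset G D v i).ncard : ℝ)) :
    s = r - 2 := by
  have hr1 : 0 < r - 1 := by omega
  have hub : s ≤ r - 2 := by
    by_contra h
    have hs : r - 1 ≤ s := by omega
    exact hfree (fan_copy_of_big_clique hk hr hs D v hv hclD hcardD hv0D hDD hK hKD)
  by_contra hnes
  have hslt : s + 3 ≤ r := by omega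
  have hrR : (4:ℝ) ≤ (r:ℝ) := by exact_mod_cast hr
  have hkR : (1:ℝ) ≤ (k:ℝ) := by exact_mod_cast hk
  have hnR : 4*((k:ℝ)+1)^2*(r:ℝ)^4 ≤ (n:ℝ) := by exact_mod_cast hn
  have hsR : (s:ℝ) + 3 ≤ (r:ℝ) := by exact_mod_cast hslt
  have hrpos : (0:ℝ) < (r:ℝ) - 1 := by linarith
  rcases Nat.eq_zero_or_pos s with hs0 | hs1
  · -- s = 0 : extend the clique {v 0} by a neighbour outside the D's
    subst hs0
    classical
    set bad : Finset (Fin n) := Finset.univ.biUnion D ∪ Finset.image v Finset.univ with hbad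
    have hbadcard : bad.card ≤ k * r + 1 := by
      refine le_trans (Finset.card_union_le _ _) ?_
      have h1 : (Finset.univ.biUnion D).card ≤ k * r := by
        refine le_trans (Finset.card_biUnion_le) ?_
        simp [hcardD, Finset.sum_const, mul_comm]
      have h2 : (Finset.image v Finset.univ).card ≤ 1 := by
        refine le_trans (Finset.card_image_le) (by simp)
      omega
    have hv0bad : v 0 ∈ bad := by
      refine Finset.mem_union_right _ ?_
      exact Finset.mem_image.mpr ⟨0, Finset.mem_univ _, rfl⟩
    have hsub : G.neighborSet (v 0) ⊆ ↑bad := by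
      by_contra hns
      obtain ⟨u, hu1, hu2⟩ := Set.not_subset.mp hns
      have huadj : G.Adj (v 0) u := hu1
      have hune : u ≠ v 0 := fun h => hu2 (h ▸ hv0bad)
      have hcl : G.IsClique (({v 0, u} : Finset (Fin n)) : Set (Fin n)) := by
        intro x hx y hy hxy
        simp only [Finset.coe_insert, Finset.coe_singleton, Set.mem_insert_iff,
          Set.mem_singleton_iff] at hx hy
        rcases hx with hx | hx <;> rcases hy with hy | hy <;> subst hx <;> subst hy
        · exact absurd rfl hxy
        · exact huadj
        · exact huadj.symm
        · exact absurd rfl hxy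
      have hint : ∀ i, (({v 0, u} : Finset (Fin n)) : Set (Fin n)) ∩ (D i : Set (Fin n))
          ⊆ {v 0} := by
        intro i x hx
        obtain ⟨hx1, hx2⟩ := hx
        simp only [Finset.coe_insert, Finset.coe_singleton, Set.mem_insert_iff,
          Set.mem_singleton_iff] at hx1
        rcases hx1 with hx1 | hx1
        · exact hx1
        · exfalso
          subst hx1
          exact hu2 (Finset.mem_union_left _
            (Finset.mem_biUnion.mpr ⟨i, Finset.mem_univ _, hx2⟩))
      have := hmax {v 0, u} hcl (Finset.mem_insert_self _ _) hint
      rw [Finset.card_insert_of_notMem (by simp [Ne.symm hune]), Finset.card_singleton] at this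
      omega
    have hdeg : ((G.neighborSet (v 0)).ncard : ℝ) ≤ (k : ℝ) * r + 1 := by
      have h1 : (G.neighborSet (v 0)).ncard ≤ bad.card := by
        have := Set.ncard_le_ncard hsub (Set.toFinite _)
        simpa [Set.ncard_coe_finset] using this
      have h2 : (G.neighborSet (v 0)).ncard ≤ k * r + 1 := le_trans h1 hbadcard
      exact_mod_cast h2
    have h1 := hδ (v 0)
    have h2 : ((r:ℝ)-2)/((r:ℝ)-1)*n < (k:ℝ)*r + k + 2 := by push_cast at hdeg ⊢; linarith
    rw [div_mul_eq_mul_div, div_lt_iff₀ hrpos] at h2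
    exact arith1 (k:ℝ) (r:ℝ) (n:ℝ) hkR hrR (by exact_mod_cast hnR) (by push_cast at h2 ⊢; linarith)
  · -- s ≥ 1 : the independent set X_1 is too large for the minimum degree
    set i : Fin (s+1) := ⟨1, by omega⟩ with hi
    have hi0 : i ≠ 0 := by
      rw [hi]
      exact Fin.ne_of_val_ne (by simp)
    have hX := hXsize i
    have hXpos : (0:ℝ) < ((Xset G D v i).ncard : ℝ) := by
      have h2 : ((k:ℝ)+1)*s + (k:ℝ)*((r:ℝ)-1) + s + 1 < ((r:ℝ)-1-s)/((r:ℝ)-1)*n := by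
        rw [div_mul_eq_mul_div, lt_div_iff₀ hrpos]
        exact arith2 (k:ℝ) (r:ℝ) (n:ℝ) (s:ℝ) hkR hrR (Nat.cast_nonneg s) hsR hnR
      linarith
    obtain ⟨a, ha⟩ : (Xset G D v i).Nonempty := by
      apply Set.nonempty_of_ncard_ne_zero
      intro h
      rw [h] at hXpos
      simp at hXpos
    have hdisj : Disjoint (G.neighborSet a) (Xset G D v i) := by
      rw [Set.disjoint_left]
      intro b hb hbX
      exact hXind i hi0 a ha b hbX hb
    have hcard : (G.neighborSet a).ncard + (Xset G D v i).ncard ≤ n := by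
      have hu := Set.ncard_union_eq hdisj (Set.toFinite _) (Set.toFinite _)
      have h2 : (G.neighborSet a ∪ Xset G D v i).ncard ≤ n := by
        have := Set.ncard_le_ncard (Set.subset_univ (G.neighborSet a ∪ Xset G D v i))
          Set.finite_univ
        simpa [Set.ncard_univ] using this
      omega
    have h1 := hδ a
    have hcR : ((G.neighborSet a).ncard:ℝ) + ((Xset G D v i).ncard:ℝ) ≤ (n:ℝ) := by
      exact_mod_cast hcard
    have h4 : ((r:ℝ)-2)/((r:ℝ)-1)*n + ((r:ℝ)-1-s)/((r:ℝ)-1)*n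
        - ((k:ℝ)+1) - (((k:ℝ)+1)*s + (k:ℝ)*((r:ℝ)-1) + s + 1) < n := by linarith
    have h5 : (((r:ℝ)-2) + ((r:ℝ)-1-s))*n/((r:ℝ)-1)
        < n + ((k:ℝ)+1) + (((k:ℝ)+1)*s + (k:ℝ)*((r:ℝ)-1) + s + 1) := by
      have heq : ((r:ℝ)-2)/((r:ℝ)-1)*n + ((r:ℝ)-1-s)/((r:ℝ)-1)*n
          = (((r:ℝ)-2) + ((r:ℝ)-1-s))*n/((r:ℝ)-1) := by ring
      linarith
    rw [div_lt_iff₀ hrpos] at h5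
    exact arith3 (k:ℝ) (r:ℝ) (n:ℝ) (s:ℝ) hkR hrR (Nat.cast_nonneg s) hsR hnR h5
end

section
/- By Turán's theorem, for n ≥ r − 1 ≥ 1, ex(n, K_r) = ((r−2)/(2(r−1)))n² − ε, where ε = l(r−1−l)/(2(r−1)) and l ∈ {0, 1, …, r−2} satisfies l ≡ n (mod r−1). Moreover 0 ≤ ε ≤ (r−1)/8, and ε = 0 if and only if (r−1) divides n. -/
open SimpleGraph Finset

lemma hasCopy_top_iff {n : ℕ} {V : Type*} (G : SimpleGraph V) :
    HasCopy (⊤ : SimpleGraph (Fin n)) G ↔ ¬ G.CliqueFree n := by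
  rw [cliqueFree_iff, not_isEmpty_iff]
  constructor
  · rintro ⟨f, hf⟩
    exact ⟨⟨f, hf⟩⟩
  · rintro ⟨f⟩; exact ⟨f.toHom, f.injective⟩

lemma edgeCount_eq {V : Type*} [Fintype V] (G : SimpleGraph V) [DecidableEq V]
    [DecidableRel G.Adj] : edgeCount G = #G.edgeFinset := by
  rw [edgeCount, ← coe_edgeFinset, Set.ncard_coe_finset]

lemma exNum_eq (n r : ℕ) (hr : 0 < r) :
    exNum n (⊤ : SimpleGraph (Fin (r+1))) = #(turanGraph n r).edgeFinset := by
  classical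
  rw [exNum]
  have hmem : #(turanGraph n r).edgeFinset ∈
      {m | ∃ G : SimpleGraph (Fin n), ¬ HasCopy (⊤ : SimpleGraph (Fin (r+1))) G ∧ m = edgeCount G} :=
    ⟨turanGraph n r, by
      rw [hasCopy_top_iff, not_not]; exact turanGraph_cliqueFree hr, (edgeCount_eq _).symm⟩
  apply le_antisymm
  · apply csSup_le ⟨_, hmem⟩
    rintro m ⟨G, hG, rfl⟩
    rw [hasCopy_top_iff, not_not] at hG
    rw [edgeCount_eq]
    exact (isTuranMaximal_turanGraph hr).2 hG
  · apply le_csSup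
    · refine ⟨#(turanGraph n r).edgeFinset, ?_⟩
      rintro m ⟨G, hG, rfl⟩
      rw [hasCopy_top_iff, not_not] at hG
      rw [edgeCount_eq]
      exact (isTuranMaximal_turanGraph hr).2 hG
    · exact hmem

lemma turan_adj (n r : ℕ) (v w : Fin n) :
    (turanGraph n r).Adj v w ↔ v.val % r ≠ w.val % r := by
  simp [turanGraph, Fin.mod_def]

lemma count_class (n r i : ℕ) (hr : 0 < r) (hi : i < r) :
    #(Finset.univ.filter (fun v : Fin n => v.val % r = i))
      = n / r + if i < n % r then 1 else 0 := by
  have h1 : #(Finset.univ.filter (fun v : Fin n => v.val % r = i))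
      = #((Finset.range n).filter (fun m => m % r = i)) := by
    rw [Finset.card_filter, Finset.card_filter]
    exact Fin.sum_univ_eq_sum_range (fun m => if m % r = i then 1 else 0) n
  have h2 := Nat.count_modEq_card n hr i
  rw [Nat.count_eq_card_filter_range] at h2
  have h3 : ((Finset.range n).filter (fun m => m % r = i))
      = ((Finset.range n).filter (· ≡ i [MOD r])) := by
    apply Finset.filter_congr
    intro m _
    simp [Nat.ModEq, Nat.mod_eq_of_lt hi]
  rw [h1, h3, h2, Nat.mod_eq_of_lt hi]

lemma degree_add (n r : ℕ) (v : Fin n) :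
    (turanGraph n r).degree v
      + #(Finset.univ.filter (fun w : Fin n => w.val % r = v.val % r)) = n := by
  classical
  rw [← card_neighborFinset_eq_degree, neighborFinset_eq_filter]
  have : (Finset.univ.filter (fun w : Fin n => w.val % r = v.val % r))
      = Finset.univ.filter (fun w => ¬ (turanGraph n r).Adj v w) := by
    apply Finset.filter_congr; intro w _
    rw [turan_adj]; simp [eq_comm]
  rw [this, Finset.card_filter_add_card_filter_not, Finset.card_univ, Fintype.card_fin]

lemma sum_classes (n r : ℕ) (hr : 0 < r) :
    ∑ v : Fin n, #(Finset.univ.filter (fun w : Fin n => w.val % r = v.val % r))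
      = ∑ i ∈ Finset.range r,
          (#(Finset.univ.filter (fun w : Fin n => w.val % r = i)))^2 := by
  have key : ∀ i ∈ Finset.range r,
      ∑ v ∈ Finset.univ.filter (fun v : Fin n => v.val % r = i),
        #(Finset.univ.filter (fun w : Fin n => w.val % r = v.val % r))
      = (#(Finset.univ.filter (fun w : Fin n => w.val % r = i)))^2 := by
    intro i _
    have hc : ∀ v ∈ Finset.univ.filter (fun v : Fin n => v.val % r = i),
        #(Finset.univ.filter (fun w : Fin n => w.val % r = v.val % r))
        = #(Finset.univ.filter (fun w : Fin n => w.val % r = i)) := by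
      intro v hv; rw [Finset.mem_filter] at hv; rw [hv.2]
    rw [Finset.sum_congr rfl hc, Finset.sum_const, smul_eq_mul, sq]
  rw [← Finset.sum_congr rfl key]
  exact (Finset.sum_fiberwise_of_maps_to (fun v _ => Finset.mem_range.mpr
    (Nat.mod_lt _ hr)) _).symm

lemma two_E (n r : ℕ) (hr : 0 < r) :
    2 * #(turanGraph n r).edgeFinset
      + ∑ i ∈ Finset.range r,
          (#(Finset.univ.filter (fun w : Fin n => w.val % r = i)))^2 = n^2 := by
  classical
  rw [← sum_degrees_eq_twice_card_edges, ← sum_classes n r hr,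
    ← Finset.sum_add_distrib]
  rw [Finset.sum_congr rfl (fun v _ => degree_add n r v), Finset.sum_const,
    Finset.card_univ, Fintype.card_fin, smul_eq_mul, sq]

lemma sum_sq (n r : ℕ) (hr : 0 < r) :
    ∑ i ∈ Finset.range r,
        (#(Finset.univ.filter (fun w : Fin n => w.val % r = i)))^2
      = n % r * (n / r + 1)^2 + (r - n % r) * (n / r)^2 := by
  have hl : n % r ≤ r := (Nat.mod_lt _ hr).le
  rw [Finset.sum_congr rfl (fun i hi => by
    rw [count_class n r i hr (Finset.mem_range.mp hi)])]
  have : ∀ i ∈ Finset.range r, (n / r + if i < n % r then 1 else 0)^2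
      = if i < n % r then (n / r + 1)^2 else (n / r)^2 := by
    intro i _; split <;> simp
  rw [Finset.sum_congr rfl this, Finset.sum_ite, Finset.sum_const, Finset.sum_const]
  have h1 : (Finset.range r).filter (fun i => i < n % r) = Finset.range (n % r) := by
    ext i; simp; omega
  have h2 : #((Finset.range r).filter (fun i => ¬ i < n % r)) = r - n % r := by
    have : (Finset.range r).filter (fun i => ¬ i < n % r) = Finset.Ico (n % r) r := by
      ext i; simp [Finset.mem_Ico]; omega
    rw [this, Nat.card_Ico]
  rw [h1, h2, Finset.card_range, smul_eq_mul, smul_eq_mul]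

theorem turan_eps' (n r' : ℕ) (hr' : 0 < r') (E : ℕ)
    (h2E : 2 * E + (n % r' * (n / r' + 1)^2 + (r' - n % r') * (n / r')^2) = n^2) :
    (E : ℝ) = ((r' : ℝ) - 1) / (2 * (r' : ℝ)) * (n : ℝ)^2
      - ((n % r' : ℕ) : ℝ) * ((r' : ℝ) - ((n % r' : ℕ) : ℝ)) / (2 * (r' : ℝ)) := by
  have hl : n % r' < r' := Nat.mod_lt _ hr'
  have hnn : (n : ℝ) = (r' : ℝ) * ((n / r' : ℕ) : ℝ) + ((n % r' : ℕ) : ℝ) := by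
    exact_mod_cast (Nat.div_add_mod n r').symm
  have h2E' : 2 * (E : ℝ) + (((n % r' : ℕ) : ℝ) * (((n / r' : ℕ) : ℝ) + 1)^2
      + ((r' : ℝ) - ((n % r' : ℕ) : ℝ)) * ((n / r' : ℕ) : ℝ)^2) = (n : ℝ)^2 := by
    have := congrArg (Nat.cast : ℕ → ℝ) h2E
    push_cast [Nat.cast_sub hl.le] at this
    linarith
  have hR : (0:ℝ) < (r' : ℝ) := by exact_mod_cast hr'
  field_simp
  nlinarith [h2E', hnn, sq_nonneg ((n:ℝ))]

theorem turan_eps (n r : ℕ) (hr : 2 ≤ r) (hn : r - 1 ≤ n) :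
    ∀ l : ℕ, l = n % (r - 1) →
    ∀ ε : ℝ, ε = ((l : ℝ) * ((r : ℝ) - 1 - l)) / (2 * ((r : ℝ) - 1)) →
    (exNum n (⊤ : SimpleGraph (Fin r)) : ℝ)
        = ((r : ℝ) - 2) / (2 * ((r : ℝ) - 1)) * (n : ℝ)^2 - ε ∧
      0 ≤ ε ∧ ε ≤ ((r : ℝ) - 1) / 8 ∧ (ε = 0 ↔ (r - 1) ∣ n) := by
  intro l hl ε hε
  subst hl
  subst hε
  have hr' : 0 < r - 1 := by omega
  have hrr : r = (r - 1) + 1 := by omega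
  have hc1 : ((r - 1 : ℕ) : ℝ) = (r : ℝ) - 1 := by
    push_cast [Nat.cast_sub (by omega : 1 ≤ r)]; ring
  have hR : (0:ℝ) < (r : ℝ) - 1 := by rw [← hc1]; exact_mod_cast hr'
  have hEx : exNum n (⊤ : SimpleGraph (Fin r)) = #(turanGraph n (r - 1)).edgeFinset := by
    have := exNum_eq n (r - 1) hr'
    rw [← hrr] at this
    exact this
  have h2E := two_E n (r - 1) hr'
  rw [sum_sq n (r - 1) hr'] at h2E
  have hmain := turan_eps' n (r - 1) hr' _ h2E
  rw [hc1] at hmain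
  have hLlt : ((n % (r - 1) : ℕ) : ℝ) < (r : ℝ) - 1 := by
    rw [← hc1]; exact_mod_cast Nat.mod_lt _ hr'
  have hL0 : (0:ℝ) ≤ ((n % (r - 1) : ℕ) : ℝ) := by positivity
  refine ⟨?_, ?_, ?_, ?_⟩
  · rw [hEx, hmain]; ring
  · apply div_nonneg (mul_nonneg hL0 (by linarith)) (by linarith)
  · rw [div_le_div_iff₀ (by linarith) (by norm_num)]
    nlinarith [sq_nonneg ((r:ℝ) - 1 - 2 * ((n % (r - 1) : ℕ) : ℝ))]
  · rw [div_eq_zero_iff, mul_eq_zero]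
    constructor
    · rintro (⟨h | h⟩ | h)
      · exact Nat.dvd_of_mod_eq_zero (by exact_mod_cast h)
      · linarith
      · linarith
    · intro h
      left; left
      have : n % (r - 1) = 0 := Nat.mod_eq_zero_of_dvd h
      exact_mod_cast this
end
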